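/- Let σ > 0, k > 0, and s ∈ (0, 1/3). Then the following two conditions are equivalent: (i) for every probability measure ν on ℝ with ∫ t dν(t) = 0 and ∫ t² dν(t) = 3σ², the pushforward μ₀ of ((Lebesgue measure restricted to (0,1)) ⊗ ν) under (u,t) ↦ u·t satisfies μ₀({x ∈ ℝ : −k ≤ x ≤ k}) ≥ 1 − s; (ii) 4σ² ≤ 9 s k². -/

import Mathlib

open MeasureTheory

/-- The Khinchine transform: the law of `U * ζ` where `U` is uniform on `(0,1)`,
independent of `ζ` with law `ν`. -/
noncomputable def khinchine (ν : Measure ℝ) : Measure ℝ :=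
  Measure.map (fun p : ℝ × ℝ => p.1 * p.2)
    ((volume.restrict (Set.Ioo (0 : ℝ) 1)).prod ν)

noncomputable def hfun (k t : ℝ) : ENNReal :=
  if |t| ≤ k then 1 else ENNReal.ofReal (k / |t|)

noncomputable def gfun (k t : ℝ) : ENNReal :=
  if |t| ≤ k then 0 else ENNReal.ofReal (1 - k / |t|)

lemma hfun_meas (k : ℝ) : Measurable (hfun k) := by
  unfold hfun
  exact Measurable.ite (measurableSet_le (continuous_abs.measurable) measurable_const)
    measurable_const (ENNReal.measurable_ofReal.comp
      (measurable_const.div continuous_abs.measurable))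

lemma hg_sum (k t : ℝ) (hk : 0 < k) : hfun k t + gfun k t = 1 := by
  unfold hfun gfun
  by_cases h : |t| ≤ k
  · simp [h]
  · rw [if_neg h, if_neg h]
    push_neg at h
    have ht : 0 < |t| := lt_trans hk h
    have h1 : 0 ≤ k / |t| := by positivity
    have h2 : k / |t| ≤ 1 := le_of_lt ((div_lt_one ht).2 h)
    rw [← ENNReal.ofReal_add h1 (by linarith)]
    norm_num

lemma mySlice (k t : ℝ) (hk : 0 < k) :
    volume.restrict (Set.Ioo (0 : ℝ) 1) {u : ℝ | u * t ∈ Set.Icc (-k) k} = hfun k t := by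
  have hms : MeasurableSet {u : ℝ | u * t ∈ Set.Icc (-k) k} :=
    (measurable_id.mul_const t) measurableSet_Icc
  rw [Measure.restrict_apply hms]
  unfold hfun
  by_cases h : |t| ≤ k
  · rw [if_pos h]
    have : {u : ℝ | u * t ∈ Set.Icc (-k) k} ∩ Set.Ioo (0 : ℝ) 1 = Set.Ioo (0 : ℝ) 1 := by
      ext u
      simp only [Set.mem_inter_iff, Set.mem_setOf_eq, Set.mem_Icc, Set.mem_Ioo]
      constructor
      · rintro ⟨_, h2⟩; exact h2
      · rintro ⟨h1, h2⟩
        refine ⟨⟨?_, ?_⟩, h1, h2⟩ <;>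
          nlinarith [le_abs_self t, neg_abs_le t, abs_nonneg t]
    rw [this, Real.volume_Ioo]
    norm_num
  · rw [if_neg h]
    push_neg at h
    have ht : 0 < |t| := lt_trans hk h
    have : {u : ℝ | u * t ∈ Set.Icc (-k) k} ∩ Set.Ioo (0 : ℝ) 1 = Set.Ioc (0 : ℝ) (k / |t|) := by
      ext u
      simp only [Set.mem_inter_iff, Set.mem_setOf_eq, Set.mem_Icc, Set.mem_Ioo, Set.mem_Ioc]
      constructor
      · rintro ⟨⟨h1, h2⟩, h3, h4⟩
        refine ⟨h3, ?_⟩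
        rw [le_div_iff₀ ht]
        calc u * |t| = |u * t| := by rw [abs_mul, abs_of_pos h3]
        _ ≤ k := abs_le.2 ⟨h1, h2⟩
      · rintro ⟨h1, h2⟩
        have hut : |u * t| ≤ k := by
          rw [abs_mul, abs_of_pos h1]
          exact (le_div_iff₀ ht).1 h2
        have := abs_le.1 hut
        refine ⟨⟨this.1, this.2⟩, h1, ?_⟩
        calc u ≤ k / |t| := h2
        _ < 1 := (div_lt_one ht).2 h
    rw [this, Real.volume_Ioc]
    norm_num

lemma khinchine_apply (ν : Measure ℝ) [SFinite ν] (k : ℝ) (hk : 0 < k) :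
    khinchine ν {x : ℝ | -k ≤ x ∧ x ≤ k} = ∫⁻ t, hfun k t ∂ν := by
  have hset : {x : ℝ | -k ≤ x ∧ x ≤ k} = Set.Icc (-k) k := rfl
  unfold khinchine
  rw [hset, Measure.map_apply (by fun_prop : Measurable (fun p : ℝ × ℝ => p.1 * p.2)) measurableSet_Icc,
    Measure.prod_apply_symm (measurableSet_Icc.preimage (by fun_prop) :
      MeasurableSet ((fun p : ℝ × ℝ => p.1 * p.2) ⁻¹' Set.Icc (-k) k))]
  exact lintegral_congr fun t => mySlice k t hk

-- Easy direction: the Gauss bound.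
lemma easy_dir (σ k s : ℝ) (hσ : 0 < σ) (hk : 0 < k) (hs0 : 0 < s) (hs1 : s < 1 / 3)
    (hineq : 4 * σ ^ 2 ≤ 9 * s * k ^ 2)
    (ν : Measure ℝ) (hν : IsProbabilityMeasure ν)
    (hv : ∫ t, t ^ 2 ∂ν = 3 * σ ^ 2) :
    ENNReal.ofReal (1 - s) ≤ khinchine ν {x : ℝ | -k ≤ x ∧ x ≤ k} := by
  have hint2 : Integrable (fun t : ℝ => t ^ 2) ν := by
    by_contra hni
    rw [integral_undef hni] at hv
    nlinarith
  rw [khinchine_apply ν k hk]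
  have hgle : ∫⁻ t, gfun k t ∂ν ≤ ENNReal.ofReal s := by
    have step1 : ∀ t, gfun k t ≤ ENNReal.ofReal (4 * t ^ 2 / (27 * k ^ 2)) := by
      intro t
      unfold gfun
      by_cases h : |t| ≤ k
      · simp [h]
      · rw [if_neg h]
        push_neg at h
        apply ENNReal.ofReal_le_ofReal
        set A := |t| with hA
        have ht2 : t ^ 2 = A ^ 2 := (sq_abs t).symm
        have hA0 : 0 < A := lt_trans hk h
        rw [ht2]
        have key : 0 ≤ (2 * A - 3 * k) ^ 2 * (A + 3 * k) :=
          mul_nonneg (sq_nonneg _) (by positivity)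
        have h1 : 1 - k / A = (A - k) / A := by field_simp
        rw [h1, div_le_div_iff₀ hA0 (by positivity)]
        nlinarith [key]
    have hrw : (fun t : ℝ => 4 * t ^ 2 / (27 * k ^ 2)) = fun t : ℝ => (4 / (27 * k ^ 2)) * t ^ 2 := by
      funext t; ring
    have hint' : Integrable (fun t : ℝ => 4 * t ^ 2 / (27 * k ^ 2)) ν := by
      rw [hrw]; exact hint2.const_mul _
    calc ∫⁻ t, gfun k t ∂ν ≤ ∫⁻ t, ENNReal.ofReal (4 * t ^ 2 / (27 * k ^ 2)) ∂ν :=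
          lintegral_mono step1
      _ = ENNReal.ofReal (∫ t, 4 * t ^ 2 / (27 * k ^ 2) ∂ν) :=
          (ofReal_integral_eq_lintegral_ofReal hint'
            (Filter.Eventually.of_forall fun t => by positivity)).symm
      _ ≤ ENNReal.ofReal s := by
          apply ENNReal.ofReal_le_ofReal
          rw [hrw, integral_const_mul, hv, div_mul_eq_mul_div, div_le_iff₀ (by positivity)]
          nlinarith
  have htot : (∫⁻ t, hfun k t ∂ν) + ∫⁻ t, gfun k t ∂ν = 1 := by
    rw [← lintegral_add_left (hfun_meas k)]
    calc ∫⁻ t, (hfun k t + gfun k t) ∂ν = ∫⁻ _, 1 ∂ν :=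
          lintegral_congr fun t => hg_sum k t hk
      _ = 1 := by rw [lintegral_one, measure_univ]
  have hcancel : ENNReal.ofReal (1 - s) + ENNReal.ofReal s = 1 := by
    rw [← ENNReal.ofReal_add (by linarith) (le_of_lt hs0)]
    norm_num
  have hfin : ENNReal.ofReal (1 - s) + ENNReal.ofReal s ≤
      (∫⁻ t, hfun k t ∂ν) + ENNReal.ofReal s := by
    rw [hcancel, ← htot]
    exact add_le_add le_rfl hgle
  exact (ENNReal.add_le_add_iff_right ENNReal.ofReal_ne_top).1 hfin

lemma hard_dir (σ k s : ℝ) (hσ : 0 < σ) (hk : 0 < k) (hs0 : 0 < s) (hs1 : s < 1 / 3)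
    (hyp : ∀ ν : Measure ℝ, IsProbabilityMeasure ν →
        (∫ t, t ∂ν = 0) → (∫ t, t ^ 2 ∂ν = 3 * σ ^ 2) →
        ENNReal.ofReal (1 - s) ≤ khinchine ν {x : ℝ | -k ≤ x ∧ x ≤ k}) :
    4 * σ ^ 2 ≤ 9 * s * k ^ 2 := by
  set a : ℝ := max (3 * k / 2) (σ * Real.sqrt 3) with hadef
  have ha32 : 3 * k / 2 ≤ a := le_max_left _ _
  have haσ : σ * Real.sqrt 3 ≤ a := le_max_right _ _
  have hak : k < a := by linarith
  have ha0 : 0 < a := lt_trans hk hak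
  have hsqrt3 : Real.sqrt 3 ^ 2 = 3 := Real.sq_sqrt (by norm_num)
  set p : ℝ := 3 * σ ^ 2 / a ^ 2 with hpdef
  have hp0 : 0 < p := by positivity
  have hp1 : p ≤ 1 := by
    rw [hpdef, div_le_one (by positivity)]
    have h1 : (σ * Real.sqrt 3) ^ 2 ≤ a ^ 2 := by
      apply pow_le_pow_left₀ (by positivity) haσ
    rw [mul_pow, hsqrt3] at h1
    linarith
  set ν : Measure ℝ := ENNReal.ofReal (1 - p) • Measure.dirac 0 +
      (ENNReal.ofReal (p / 2) • Measure.dirac a + ENNReal.ofReal (p / 2) • Measure.dirac (-a))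
      with hνdef
  have hνint : ∀ f : ℝ → ℝ, Measurable f → Integrable f ν := by
    intro f hf
    refine ⟨hf.aestronglyMeasurable, ?_⟩
    show (∫⁻ t, ‖f t‖₊ ∂ν) < ⊤
    have hm : Measurable fun t => (‖f t‖₊ : ENNReal) := hf.nnnorm.coe_nnreal_ennreal
    rw [hνdef, lintegral_add_measure, lintegral_add_measure, lintegral_smul_measure,
      lintegral_smul_measure, lintegral_smul_measure, lintegral_dirac' _ hm,
      lintegral_dirac' _ hm, lintegral_dirac' _ hm]
    refine ENNReal.add_lt_top.2 ⟨?_, ENNReal.add_lt_top.2 ⟨?_, ?_⟩⟩ <;>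
      exact ENNReal.mul_lt_top ENNReal.ofReal_lt_top ENNReal.coe_lt_top
  have key : ∀ f : ℝ → ℝ, Measurable f →
      ∫ t, f t ∂ν = (1 - p) * f 0 + ((p / 2) * f a + (p / 2) * f (-a)) := by
    intro f hf
    have hI := hνint f hf
    rw [hνdef] at hI ⊢
    rw [integral_add_measure hI.left_of_add_measure hI.right_of_add_measure,
      integral_add_measure hI.right_of_add_measure.left_of_add_measure
        hI.right_of_add_measure.right_of_add_measure,
      integral_smul_measure, integral_smul_measure, integral_smul_measure,
      integral_dirac, integral_dirac, integral_dirac,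
      ENNReal.toReal_ofReal (by linarith), ENNReal.toReal_ofReal (by linarith),
      smul_eq_mul, smul_eq_mul, smul_eq_mul]
  have hprob : IsProbabilityMeasure ν := by
    constructor
    rw [hνdef]
    simp only [Measure.add_apply, Measure.smul_apply, smul_eq_mul, measure_univ, mul_one]
    rw [← ENNReal.ofReal_add (by linarith) (by linarith),
      ← ENNReal.ofReal_add (by linarith) (by linarith)]
    norm_num
  have hmean : ∫ t, t ∂ν = 0 := by
    rw [key (fun t => t) measurable_id']; ring
  have hvar : ∫ t, t ^ 2 ∂ν = 3 * σ ^ 2 := by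
    rw [key (fun t => t ^ 2) (measurable_id'.pow_const 2)]
    simp only [neg_sq]
    rw [hpdef]
    field_simp
    ring
  have hbound := hyp ν hprob hmean hvar
  rw [khinchine_apply ν k hk] at hbound
  have hlin : (∫⁻ t, hfun k t ∂ν) = ENNReal.ofReal (1 - p + p * (k / a)) := by
    have hm := hfun_meas k
    rw [hνdef, lintegral_add_measure, lintegral_add_measure, lintegral_smul_measure,
      lintegral_smul_measure, lintegral_smul_measure, lintegral_dirac' _ hm,
      lintegral_dirac' _ hm, lintegral_dirac' _ hm]
    have h0 : hfun k 0 = 1 := by unfold hfun; rw [if_pos (by simp [le_of_lt hk])]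
    have hka : ¬ |a| ≤ k := by rw [abs_of_pos ha0]; linarith
    have hka' : ¬ |(-a)| ≤ k := by rw [abs_neg, abs_of_pos ha0]; linarith
    have h1 : hfun k a = ENNReal.ofReal (k / a) := by
      unfold hfun; rw [if_neg hka, abs_of_pos ha0]
    have h2 : hfun k (-a) = ENNReal.ofReal (k / a) := by
      unfold hfun; rw [if_neg hka', abs_neg, abs_of_pos ha0]
    have hka0 : 0 ≤ k / a := le_of_lt (div_pos hk ha0)
    have hpk : 0 ≤ p / 2 * (k / a) := mul_nonneg (by linarith) hka0
    rw [h0, h1, h2, smul_eq_mul, mul_one, smul_eq_mul, ← ENNReal.ofReal_mul (by linarith),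
      ← ENNReal.ofReal_add hpk hpk,
      ← ENNReal.ofReal_add (by linarith) (by linarith)]
    congr 1
    ring
  rw [hlin] at hbound
  have hreal : 1 - s ≤ 1 - p + p * (k / a) := by
    have hnn : 0 ≤ p * (k / a) := mul_nonneg hp0.le (div_pos hk ha0).le
    have := (ENNReal.ofReal_le_ofReal_iff (by linarith)).1 hbound
    linarith
  by_cases hcase : σ * Real.sqrt 3 ≤ 3 * k / 2
  · have ha : a = 3 * k / 2 := max_eq_left hcase
    have hka : k / a = 2 / 3 := by rw [ha]; field_simp
    have hp : p = 4 * σ ^ 2 / (3 * k ^ 2) := by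
      rw [hpdef, ha]; field_simp; ring
    rw [hka] at hreal
    have h1 : p ≤ 3 * s := by linarith
    rw [hp, div_le_iff₀ (by positivity : (0:ℝ) < 3 * k ^ 2)] at h1
    nlinarith
  · push_neg at hcase
    exfalso
    have ha : a = σ * Real.sqrt 3 := max_eq_right (le_of_lt hcase)
    have hp : p = 1 := by
      rw [hpdef, ha, mul_pow, hsqrt3]; field_simp
    have hka : k / a < 2 / 3 := by
      rw [ha, div_lt_iff₀ (by nlinarith : (0:ℝ) < σ * Real.sqrt 3)]
      nlinarith
    rw [hp] at hreal
    linarith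


/-- **One-dimensional core of Theorem 1.** For `σ, k > 0` and `s ∈ (0, 1/3)`, the
distributionally robust chance constraint `μ₀([-k, k]) ≥ 1 - s` over all mean-`0`,
variance-`σ²`, unimodal-about-`0` distributions `μ₀` (in Khinchine form) holds
exactly when `4σ² ≤ 9 s k²`. -/
theorem stmt2 (σ k s : ℝ) (hσ : 0 < σ) (hk : 0 < k) (hs : s ∈ Set.Ioo (0 : ℝ) (1 / 3)) :
    (∀ ν : Measure ℝ, IsProbabilityMeasure ν →
        (∫ t, t ∂ν = 0) → (∫ t, t ^ 2 ∂ν = 3 * σ ^ 2) →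
        ENNReal.ofReal (1 - s) ≤ khinchine ν {x : ℝ | -k ≤ x ∧ x ≤ k}) ↔
      4 * σ ^ 2 ≤ 9 * s * k ^ 2 := by
  obtain ⟨hs0, hs1⟩ := hs
  constructor
  · exact fun hyp => hard_dir σ k s hσ hk hs0 hs1 hyp
  · intro hineq ν hν hm hv
    exact easy_dir σ k s hσ hk hs0 hs1 hineq ν hν hv
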